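/- Let Q(t) = t^d + a_{d-2} t^{d-2} + ⋯ + a_0 (no t^{d-1} term), d ≥ 2, and let Q(n, dn - b) denote the coefficient of t^{dn-b} in Q(t)^n. Then there is a constant C(b) depending only on b, d, and max_j |a_j| such that |Q(n, dn - b) / C(dn, dn - b)| ≤ C(b) · n^{⌊b/2⌋ + 1 - b} for all n sufficiently large. In particular Q(n, dn-b)/C(dn, dn-b) → 0 as n → ∞ whenever b ≥ 4. -/

import Mathlib

open Polynomial Filter

private lemma coeff_bdd (p : Polynomial ℂ) :
    ∃ B : ℝ, 0 ≤ B ∧ ∀ k, ‖p.coeff k‖ ≤ B := by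
  refine ⟨∑ k ∈ p.support, ‖p.coeff k‖,
    Finset.sum_nonneg fun _ _ => norm_nonneg _, fun k => ?_⟩
  by_cases hk : k ∈ p.support
  · exact Finset.single_le_sum (fun _ _ => norm_nonneg _) hk
  · simp only [Polynomial.notMem_support_iff.mp hk, norm_zero]
    exact Finset.sum_nonneg fun _ _ => norm_nonneg _

private lemma coeff_mul_trunc (p q : Polynomial ℂ) (k : ℕ) (h : q.natDegree ≤ k) :
    (p * q).coeff k = ∑ i ∈ Finset.range (q.natDegree + 1), q.coeff i * p.coeff (k - i) := by
  rw [mul_comm, Polynomial.coeff_mul,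
    Finset.Nat.sum_antidiagonal_eq_sum_range_succ (fun i j => q.coeff i * p.coeff j) k]
  symm
  apply Finset.sum_subset
  · exact Finset.range_subset_range.2 (by omega)
  · intro i _ hni
    have : q.natDegree < i := by
      simp only [Finset.mem_range] at hni; omega
    rw [Polynomial.coeff_eq_zero_of_natDegree_lt this, zero_mul]

private lemma recur (d : ℕ) (hd : 2 ≤ d) (Q : Polynomial ℂ) (hQ : Q.Monic)
    (hdeg : Q.natDegree = d) (hcoeff : Q.coeff (d - 1) = 0) (b n : ℕ) (hk : b ≤ d * n) :
    (Q ^ (n + 1)).coeff (d * (n + 1) - b) =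
      (∑ i ∈ Finset.range (d - 1), Q.coeff i * (Q ^ n).coeff (d * (n + 1) - b - i)) +
        (Q ^ n).coeff (d * n - b) := by
  obtain ⟨m, rfl⟩ : ∃ m, d = m + 2 := ⟨d - 2, by omega⟩
  have hmul : (m + 2) * (n + 1) = (m + 2) * n + (m + 2) := by ring
  have hdk : Q.natDegree ≤ (m + 2) * (n + 1) - b := by rw [hdeg, hmul]; omega
  rw [pow_succ, coeff_mul_trunc _ _ _ hdk, hdeg]
  rw [show m + 2 + 1 = (m + 1) + 1 + 1 by ring]
  rw [Finset.sum_range_succ, Finset.sum_range_succ]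
  have h1 : Q.coeff (m + 1) = 0 := by simpa using hcoeff
  have h2 : Q.coeff (m + 2) = 1 := by
    have := hQ.coeff_natDegree; rwa [hdeg] at this
  have h3 : (m + 2) * (n + 1) - b - (m + 2) = (m + 2) * n - b := by rw [hmul]; omega
  rw [h1, h2, h3, zero_mul, one_mul, add_zero]
  congr 1

private lemma key (d : ℕ) (hd : 2 ≤ d) (Q : Polynomial ℂ) (hQ : Q.Monic)
    (hdeg : Q.natDegree = d) (hcoeff : Q.coeff (d - 1) = 0) (b : ℕ) :
    ∃ C : ℝ, 0 ≤ C ∧ ∀ b' ≤ b, ∀ n : ℕ, b' ≤ n →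
      ‖(Q ^ n).coeff (d * n - b')‖ ≤ C * (n : ℝ) ^ (b' / 2) := by
  induction b with
  | zero =>
    refine ⟨1, zero_le_one, ?_⟩
    intro b' hb' n _
    interval_cases b'
    have hdn : d * n - 0 = (Q ^ n).natDegree := by
      rw [hQ.natDegree_pow, hdeg, Nat.sub_zero, Nat.mul_comm]
    rw [hdn, Polynomial.coeff_natDegree, (hQ.pow n).leadingCoeff]
    simp
  | succ b ih =>
    obtain ⟨C, hC, hIH⟩ := ih
    obtain ⟨M, hM, hMb⟩ := coeff_bdd Q
    obtain ⟨B, hB, hBb⟩ := coeff_bdd (Q ^ (b + 1))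
    set D : ℝ := (d : ℝ) * M * C with hD
    have hD0 : 0 ≤ D := by positivity
    refine ⟨C + (B + D), by positivity, ?_⟩
    have hmain : ∀ b' ≤ b + 1, ∀ n : ℕ, b' ≤ n →
        ‖(Q ^ n).coeff (d * n - b')‖ ≤ (C + (B + D)) * (n : ℝ) ^ (b' / 2) := by
      intro b' hb' n hn
      rcases Nat.lt_or_ge b' (b + 1) with hlt | hge
      · calc ‖(Q ^ n).coeff (d * n - b')‖ ≤ C * (n : ℝ) ^ (b' / 2) :=
              hIH b' (by omega) n hn
          _ ≤ (C + (B + D)) * (n : ℝ) ^ (b' / 2) := by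
              apply mul_le_mul_of_nonneg_right (by linarith) (by positivity)
      have hb'eq : b' = b + 1 := by omega
      subst hb'eq
      clear hb' hge
      by_cases hb0 : b = 0
      · -- b' = 1 : coefficient is exactly 0
        subst hb0
        have hz : ∀ n : ℕ, 1 ≤ n → (Q ^ n).coeff (d * n - 1) = 0 := by
          intro n hn
          induction n, hn using Nat.le_induction with
          | base => simpa [hdeg] using hcoeff
          | succ n hn ihn =>
            have h2n : 2 * n ≤ d * n := Nat.mul_le_mul hd (le_refl n)
            rw [recur d hd Q hQ hdeg hcoeff 1 n (by omega)]
            rw [ihn, add_zero]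
            apply Finset.sum_eq_zero
            intro i hi
            rw [Finset.mem_range] at hi
            have hmul : d * (n + 1) = d * n + d := by ring
            have : (Q ^ n).natDegree < d * (n + 1) - 1 - i := by
              rw [hQ.natDegree_pow, hdeg, Nat.mul_comm, hmul]; omega
            rw [Polynomial.coeff_eq_zero_of_natDegree_lt this, mul_zero]
        rw [hz n hn]
        simp only [norm_zero]
        positivity
      -- now b ≥ 1, so e := (b+1)/2 ≥ 1
      set e : ℕ := (b + 1) / 2 with he
      have he1 : 1 ≤ e := by omega
      -- step increment bound
      have hstep : ∀ n : ℕ, b + 1 ≤ n →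
          ‖∑ i ∈ Finset.range (d - 1),
              Q.coeff i * (Q ^ n).coeff (d * (n + 1) - (b + 1) - i)‖ ≤ D * (n : ℝ) ^ (e - 1) := by
        intro n hn
        have hn1 : (1 : ℝ) ≤ (n : ℝ) := by exact_mod_cast Nat.one_le_iff_ne_zero.2 (by omega)
        calc ‖∑ i ∈ Finset.range (d - 1),
                Q.coeff i * (Q ^ n).coeff (d * (n + 1) - (b + 1) - i)‖
            ≤ ∑ i ∈ Finset.range (d - 1),
                ‖Q.coeff i * (Q ^ n).coeff (d * (n + 1) - (b + 1) - i)‖ := by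
              exact norm_sum_le _ _
          _ ≤ ∑ i ∈ Finset.range (d - 1), M * (C * (n : ℝ) ^ (e - 1)) := by
              apply Finset.sum_le_sum
              intro i hi
              rw [Finset.mem_range] at hi
              rw [norm_mul]
              have h2n : 2 * n ≤ d * n := Nat.mul_le_mul hd (le_refl n)
              have hmul : d * (n + 1) = d * n + d := by ring
              have hbn : b + 1 ≤ d * n := by omega
              rcases Nat.lt_or_ge (b + 1) (d - i) with hcase | hcase
              · have : (Q ^ n).natDegree < d * (n + 1) - (b + 1) - i := by
                  rw [hQ.natDegree_pow, hdeg, Nat.mul_comm, hmul]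
                  omega
                rw [Polynomial.coeff_eq_zero_of_natDegree_lt this, norm_zero, mul_zero]
                positivity
              · set bi : ℕ := b + 1 - (d - i) with hbi
                have hidx : d * (n + 1) - (b + 1) - i = d * n - bi := by
                  have hbn : b + 1 ≤ d * n := by nlinarith
                  omega
                have hbile : bi ≤ b := by omega
                have hbin : bi ≤ n := by omega
                have h1 := hIH bi hbile n hbin
                rw [hidx]
                have hpow : (n : ℝ) ^ (bi / 2) ≤ (n : ℝ) ^ (e - 1) := by
                  apply pow_le_pow_right₀ hn1
                  omega
                calc ‖Q.coeff i‖ * ‖(Q ^ n).coeff (d * n - bi)‖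
                    ≤ M * (C * (n : ℝ) ^ (bi / 2)) := by
                      apply mul_le_mul (hMb i) h1 (norm_nonneg _) hM
                  _ ≤ M * (C * (n : ℝ) ^ (e - 1)) := by
                      apply mul_le_mul_of_nonneg_left _ hM
                      exact mul_le_mul_of_nonneg_left hpow hC
          _ ≤ D * (n : ℝ) ^ (e - 1) := by
              rw [Finset.sum_const, Finset.card_range, nsmul_eq_mul, hD]
              have hdd : ((d - 1 : ℕ) : ℝ) ≤ (d : ℝ) := by
                exact_mod_cast Nat.sub_le d 1
              have hx : (0 : ℝ) ≤ M * (C * (n : ℝ) ^ (e - 1)) := by positivity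
              calc ((d - 1 : ℕ) : ℝ) * (M * (C * (n : ℝ) ^ (e - 1)))
                  ≤ (d : ℝ) * (M * (C * (n : ℝ) ^ (e - 1))) :=
                    mul_le_mul_of_nonneg_right hdd hx
                _ = (d : ℝ) * M * C * (n : ℝ) ^ (e - 1) := by ring
      -- invariant induction
      have hinv : ∀ n : ℕ, b + 1 ≤ n →
          ‖(Q ^ n).coeff (d * n - (b + 1))‖ ≤ B + D * (n : ℝ) ^ e := by
        intro n hn
        induction n, hn using Nat.le_induction with
        | base =>
          calc ‖(Q ^ (b + 1)).coeff (d * (b + 1) - (b + 1))‖ ≤ B := hBb _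
            _ ≤ B + D * ((b + 1 : ℕ) : ℝ) ^ e := le_add_of_nonneg_right (by positivity)
        | succ n hn ihn =>
          have h2n : 2 * n ≤ d * n := Nat.mul_le_mul hd (le_refl n)
          have hbn : b + 1 ≤ d * n := by omega
          rw [recur d hd Q hQ hdeg hcoeff (b + 1) n hbn]
          have hn1 : (1 : ℝ) ≤ (n : ℝ) := by exact_mod_cast Nat.one_le_iff_ne_zero.2 (by omega)
          calc ‖_‖ ≤ ‖∑ i ∈ Finset.range (d - 1),
                Q.coeff i * (Q ^ n).coeff (d * (n + 1) - (b + 1) - i)‖ +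
                ‖(Q ^ n).coeff (d * n - (b + 1))‖ := norm_add_le _ _
            _ ≤ D * (n : ℝ) ^ (e - 1) + (B + D * (n : ℝ) ^ e) := by
                exact add_le_add (hstep n hn) ihn
            _ ≤ B + D * ((n : ℝ) + 1) ^ e := by
                have hkey : (n : ℝ) ^ e + (n : ℝ) ^ (e - 1) ≤ ((n : ℝ) + 1) ^ e := by
                  obtain ⟨e', he'⟩ : ∃ e', e = e' + 1 := ⟨e - 1, by omega⟩
                  rw [he', show e' + 1 - 1 = e' from rfl]
                  have h1 : (n : ℝ) ^ e' ≤ ((n : ℝ) + 1) ^ e' :=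
                    pow_le_pow_left₀ (by linarith) (by linarith) e'
                  have hnn : (0 : ℝ) ≤ (n : ℝ) + 1 := by linarith
                  calc (n : ℝ) ^ (e' + 1) + (n : ℝ) ^ e'
                      = (n : ℝ) ^ e' * ((n : ℝ) + 1) := by rw [pow_succ]; ring
                    _ ≤ ((n : ℝ) + 1) ^ e' * ((n : ℝ) + 1) :=
                        mul_le_mul_of_nonneg_right h1 hnn
                    _ = ((n : ℝ) + 1) ^ (e' + 1) := (pow_succ _ _).symm
                nlinarith [hD0]
            _ = B + D * (((n : ℕ) + 1 : ℕ) : ℝ) ^ e := by push_cast; ring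
      have hn1 : (1 : ℝ) ≤ (n : ℝ) := by exact_mod_cast Nat.one_le_iff_ne_zero.2 (by omega)
      have hpe : (1 : ℝ) ≤ (n : ℝ) ^ e := one_le_pow₀ hn1
      calc ‖(Q ^ n).coeff (d * n - (b + 1))‖ ≤ B + D * (n : ℝ) ^ e := hinv n hn
        _ ≤ (C + (B + D)) * (n : ℝ) ^ e := by nlinarith
    exact hmain

/-- For `Q = t^d + a_{d-2} t^{d-2} + ⋯ + a_0` (monic, no `t^{d-1}` term, `d ≥ 2`)
and fixed `b`, the normalized coefficient `Q(n, dn-b)/C(dn, dn-b)` is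
`O(n^{⌊b/2⌋ + 1 - b})` as `n → ∞`; in particular it tends to `0` when `b ≥ 4`. -/
theorem stmt_17 (d b : ℕ) (hd : 2 ≤ d) (Q : Polynomial ℂ) (hQ : Q.Monic)
    (hdeg : Q.natDegree = d) (hcoeff : Q.coeff (d - 1) = 0) :
    (∃ C : ℝ, 0 ≤ C ∧ ∃ N : ℕ, ∀ n : ℕ, N ≤ n →
      ‖(Q ^ n).coeff (d * n - b) /
          (Nat.choose (d * n) (d * n - b) : ℂ)‖ ≤
        C * (n : ℝ) ^ (((b / 2 : ℕ) : ℤ) + 1 - (b : ℤ))) ∧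
    (4 ≤ b → Tendsto
      (fun n : ℕ => (Q ^ n).coeff (d * n - b) /
          (Nat.choose (d * n) (d * n - b) : ℂ))
      atTop (nhds 0)) := by
  obtain ⟨C, hC, hkey⟩ := key d hd Q hQ hdeg hcoeff b
  have hpart1 : ∀ n : ℕ, b + 1 ≤ n →
      ‖(Q ^ n).coeff (d * n - b) /
          (Nat.choose (d * n) (d * n - b) : ℂ)‖ ≤
        (C * (b.factorial : ℝ)) * (n : ℝ) ^ (((b / 2 : ℕ) : ℤ) + 1 - (b : ℤ)) := by
    intro n hn
    have hn1 : 1 ≤ n := by omega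
    have h2n : 2 * n ≤ d * n := Nat.mul_le_mul hd (le_refl n)
    have hbdn : b ≤ d * n := by omega
    have hsym : (d * n).choose (d * n - b) = (d * n).choose b := Nat.choose_symm hbdn
    have hnR : (1 : ℝ) ≤ (n : ℝ) := by exact_mod_cast hn1
    have hne : (n : ℝ) ≠ 0 := by positivity
    have hchpos : (0 : ℝ) < ((d * n).choose b : ℝ) := by
      exact_mod_cast Nat.choose_pos hbdn
    -- nat lower bound for the binomial coefficient
    have hnatb : n ^ b ≤ (d * n).choose b * b.factorial := by
      calc n ^ b ≤ (d * n + 1 - b) ^ b :=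
            Nat.pow_le_pow_left (by omega) b
        _ ≤ (d * n).descFactorial b := Nat.pow_sub_le_descFactorial _ _
        _ = b.factorial * (d * n).choose b := Nat.descFactorial_eq_factorial_mul_choose _ _
        _ = (d * n).choose b * b.factorial := Nat.mul_comm _ _
    have hnb : (n : ℝ) ^ b ≤ ((d * n).choose b : ℝ) * (b.factorial : ℝ) := by
      exact_mod_cast hnatb
    have habs : ‖(Q ^ n).coeff (d * n - b) /
          (Nat.choose (d * n) (d * n - b) : ℂ)‖
        = ‖(Q ^ n).coeff (d * n - b)‖ / (((d * n).choose b : ℕ) : ℝ) := by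
      rw [norm_div, Complex.norm_natCast, hsym]
    rw [habs]
    have hA := hkey b le_rfl n (by omega)
    calc ‖(Q ^ n).coeff (d * n - b)‖ / (((d * n).choose b : ℕ) : ℝ)
        ≤ (C * (n : ℝ) ^ (b / 2)) / (((d * n).choose b : ℕ) : ℝ) := by gcongr
      _ = (C * (n : ℝ) ^ (b / 2)) * (1 / (((d * n).choose b : ℕ) : ℝ)) := by ring
      _ ≤ (C * (n : ℝ) ^ (b / 2)) * ((b.factorial : ℝ) / (n : ℝ) ^ b) := by
          apply mul_le_mul_of_nonneg_left _ (by positivity)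
          rw [div_le_div_iff₀ hchpos (by positivity)]
          calc (1 : ℝ) * (n : ℝ) ^ b = (n : ℝ) ^ b := one_mul _
            _ ≤ ((d * n).choose b : ℝ) * (b.factorial : ℝ) := hnb
            _ = (b.factorial : ℝ) * ((d * n).choose b : ℝ) := mul_comm _ _
      _ = (C * (b.factorial : ℝ)) * ((n : ℝ) ^ (b / 2) / (n : ℝ) ^ b) := by ring
      _ = (C * (b.factorial : ℝ)) * (n : ℝ) ^ (((b / 2 : ℕ) : ℤ) - (b : ℤ)) := by
          rw [← zpow_natCast (n : ℝ) (b / 2), ← zpow_natCast (n : ℝ) b, ← zpow_sub₀ hne]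
      _ ≤ (C * (b.factorial : ℝ)) * (n : ℝ) ^ (((b / 2 : ℕ) : ℤ) + 1 - (b : ℤ)) := by
          apply mul_le_mul_of_nonneg_left _ (by positivity)
          exact zpow_le_zpow_right₀ hnR (by omega)
  constructor
  · exact ⟨C * (b.factorial : ℝ), by positivity, b + 1, hpart1⟩
  · intro hb4
    set m : ℕ := b - b / 2 - 1 with hm
    have hm1 : 1 ≤ m := by omega
    have hz : ((b / 2 : ℕ) : ℤ) + 1 - (b : ℤ) = -(m : ℤ) := by omega
    have htend0 : Tendsto (fun n : ℕ => (n : ℝ) ^ (((b / 2 : ℕ) : ℤ) + 1 - (b : ℤ)))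
        atTop (nhds 0) := by
      have h1 : Tendsto (fun n : ℕ => (n : ℝ) ^ m) atTop atTop :=
        (tendsto_pow_atTop (by omega)).comp tendsto_natCast_atTop_atTop
      have h2 : Tendsto (fun n : ℕ => ((n : ℝ) ^ m)⁻¹) atTop (nhds 0) :=
        h1.inv_tendsto_atTop
      apply h2.congr
      intro n
      rw [hz, zpow_neg, zpow_natCast]
    have hgt : Tendsto (fun n : ℕ =>
        (C * (b.factorial : ℝ)) * (n : ℝ) ^ (((b / 2 : ℕ) : ℤ) + 1 - (b : ℤ)))
        atTop (nhds 0) := by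
      simpa using htend0.const_mul (C * (b.factorial : ℝ))
    apply squeeze_zero_norm' _ hgt
    filter_upwards [eventually_ge_atTop (b + 1)] with n hn
    exact hpart1 n hn
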